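/- Let (T_t)_{t≥0} be a strongly continuous semigroup on a Banach space X with ‖T_t‖ ≤ M e^{−λt} for all t ≥ 0 (M, λ > 0), let B : U → X be a bounded linear operator, let 0 < γ < λ, and define V^γ(x) := sup_{s≥0} ‖e^{γs} T_s x‖_X. Then for every x ∈ X and every globally bounded, piecewise continuous input u : [0,∞) → U that is right-continuous at 0, the Dini derivative of V^γ along the mild solution φ(t,x,u) = T_t x + ∫_0^t T_{t−s} B u(s) ds satisfies V̇^γ_u(x) := limsup_{h→0+} (V^γ(φ(h,x,u)) − V^γ(x))/h ≤ −γ V^γ(x) + V^γ(B u(0)). -/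

import Mathlib

open Set Filter Topology MeasureTheory

section Defs

variable {X : Type*} [NormedAddCommGroup X] [NormedSpace ℝ X] [CompleteSpace X]
variable {U : Type*} [NormedAddCommGroup U] [NormedSpace ℝ U]

/-- Class `K` functions: continuous, strictly increasing on `[0,∞)` and vanishing at `0`. -/
def ClassK (γ : ℝ → ℝ) : Prop :=
  ContinuousOn γ (Ici 0) ∧ StrictMonoOn γ (Ici 0) ∧ γ 0 = 0

/-- Class `K∞` functions: class `K` and unbounded. -/
def ClassKinf (γ : ℝ → ℝ) : Prop :=
  ClassK γ ∧ ∀ M : ℝ, ∃ r : ℝ, 0 ≤ r ∧ M < γ r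

/-- Class `KL` functions. -/
def ClassKL (β : ℝ → ℝ → ℝ) : Prop :=
  ContinuousOn (fun p : ℝ × ℝ => β p.1 p.2) (Ici 0 ×ˢ Ici 0) ∧
  (∀ t : ℝ, 0 ≤ t → ClassK (fun r => β r t)) ∧
  (∀ r : ℝ, 0 < r →
    StrictAntiOn (fun t => β r t) (Ici 0) ∧ Tendsto (fun t => β r t) atTop (nhds 0))

/-- Continuous positive definite functions on `[0,∞)`. -/
def ClassPD (α : ℝ → ℝ) : Prop :=
  ContinuousOn α (Ici 0) ∧ α 0 = 0 ∧ ∀ r : ℝ, 0 < r → 0 < α r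

/-- A strongly continuous semigroup of bounded linear operators on `X`,
parametrized by `t : ℝ` (only the values for `t ≥ 0` matter). -/
def IsC0Semigroup (T : ℝ → X →L[ℝ] X) : Prop :=
  T 0 = 1 ∧ (∀ s : ℝ, 0 ≤ s → ∀ t : ℝ, 0 ≤ t → T (s + t) = (T s).comp (T t)) ∧
  ∀ x : X, ContinuousOn (fun t => T t x) (Ici 0)

/-- Piecewise continuous functions: on each compact interval, continuous up to
finitely many exceptional points. -/
def PiecewiseContinuous (u : ℝ → U) : Prop :=
  ∀ a b : ℝ, ∃ S : Finset ℝ, ∀ t ∈ Icc a b, t ∉ S → ContinuousAt u t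

/-- Admissible inputs: globally bounded (on `[0,∞)`) piecewise continuous functions. -/
def AdmissibleInput (u : ℝ → U) : Prop :=
  PiecewiseContinuous u ∧ ∃ C : ℝ, ∀ t : ℝ, 0 ≤ t → ‖u t‖ ≤ C

/-- Admissible disturbances: piecewise continuous functions with values in the
closed unit ball of `U`. -/
def AdmissibleDisturbance (d : ℝ → U) : Prop :=
  PiecewiseContinuous d ∧ ∀ t : ℝ, 0 ≤ t → ‖d t‖ ≤ 1

/-- The sup-norm of an input over `[0,∞)`. -/
noncomputable def supNorm (u : ℝ → U) : ℝ := ⨆ t : Ici (0:ℝ), ‖u ↑t‖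

/-- Mild solutions of `ẋ = Ax + f(x,u)`:
`φ(t) = T_t x₀ + ∫_0^t T_{t-s} f(φ(s), u(s)) ds`, continuous on `[0,∞)`. -/
def IsMildSolution (T : ℝ → X →L[ℝ] X) (f : X → U → X) (x₀ : X) (u : ℝ → U)
    (φ : ℝ → X) : Prop :=
  φ 0 = x₀ ∧ ContinuousOn φ (Ici 0) ∧
  ∀ t : ℝ, 0 ≤ t → φ t = T t x₀ + ∫ s in (0:ℝ)..t, T (t - s) (f (φ s) (u s))

/-- `f : X × U → X` is bi-Lipschitz continuous on bounded sets. -/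
def BiLipschitzOnBounded (f : X → U → X) : Prop :=
  (∀ C : ℝ, 0 < C → ∃ L : ℝ, 0 < L ∧ ∀ x y : X, ‖x‖ ≤ C → ‖y‖ ≤ C → ∀ v : U,
      ‖f x v - f y v‖ ≤ L * ‖x - y‖) ∧
  (∀ C : ℝ, 0 < C → ∃ L : ℝ, 0 < L ∧ ∀ u v : U, ‖u‖ ≤ C → ‖v‖ ≤ C → ∀ x : X,
      ‖f x u - f x v‖ ≤ L * ‖u - v‖)

/-- Lipschitz continuity on bounded balls. -/
def LipschitzOnBoundedBalls {Y : Type*} [NormedAddCommGroup Y] (V : X → Y) : Prop :=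
  ∀ r : ℝ, 0 < r → ∃ L : ℝ, 0 < L ∧ ∀ x y : X, ‖x‖ ≤ r → ‖y‖ ≤ r →
    ‖V x - V y‖ ≤ L * ‖x - y‖

/-- The (upper right) Dini derivative of `V` along a trajectory `ψ`, at the point `x`. -/
noncomputable def DiniDerivAlong (V : X → ℝ) (ψ : ℝ → X) (x : X) : EReal :=
  Filter.limsup (fun t : ℝ => (((V (ψ t) - V x) / t : ℝ) : EReal)) (nhdsWithin 0 (Ioi 0))

/-- Input-to-state stability of `ẋ = Ax + f(x,u)`: forward completeness plus
a `KL`/`K` estimate on all mild solutions. -/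
def ISSProp (T : ℝ → X →L[ℝ] X) (f : X → U → X) : Prop :=
  (∀ (x : X) (u : ℝ → U), AdmissibleInput u → ∃ ψs : ℝ → X, IsMildSolution T f x u ψs) ∧
  ∃ (β : ℝ → ℝ → ℝ) (γ : ℝ → ℝ), ClassKL β ∧ ClassK γ ∧
    ∀ (x : X) (u : ℝ → U) (ψs : ℝ → X), AdmissibleInput u → IsMildSolution T f x u ψs →
      ∀ t : ℝ, 0 ≤ t → ‖ψs t‖ ≤ β ‖x‖ t + γ (supNorm u)

/-- Weak uniform robust asymptotic stability of `ẋ = Ax + f(x,u)`: there is a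
feedback `φfb ≥ ψ(‖·‖)`, Lipschitz on bounded balls, such that the closed-loop
system `ẋ = Ax + f(x, d(t)·φfb(x))` is forward complete and UGAS, uniformly over
all piecewise continuous disturbances with values in the unit ball. -/
def WURSProp (T : ℝ → X →L[ℝ] X) (f : X → U → X) : Prop :=
  ∃ (φfb : X → ℝ) (ψ : ℝ → ℝ) (β : ℝ → ℝ → ℝ),
    (∀ x : X, 0 ≤ φfb x) ∧ LipschitzOnBoundedBalls φfb ∧ ClassKinf ψ ∧
    (∀ x : X, ψ ‖x‖ ≤ φfb x) ∧ ClassKL β ∧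
    ∀ (x : X) (d : ℝ → U), AdmissibleDisturbance d →
      (∃ ψs : ℝ → X, IsMildSolution T (fun z v => f z (φfb z • v)) x d ψs) ∧
      ∀ ψs : ℝ → X, IsMildSolution T (fun z v => f z (φfb z • v)) x d ψs →
        ∀ t : ℝ, 0 ≤ t → ‖ψs t‖ ≤ β ‖x‖ t

/-- Existence of a coercive ISS Lyapunov function (in implication form) which is
Lipschitz continuous on bounded balls. -/
def CoerciveISSLF (T : ℝ → X →L[ℝ] X) (f : X → U → X) : Prop :=
  ∃ (V : X → ℝ) (ψ₁ ψ₂ χ α : ℝ → ℝ),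
    LipschitzOnBoundedBalls V ∧ ClassKinf ψ₁ ∧ ClassKinf ψ₂ ∧ ClassK χ ∧ ClassPD α ∧
    (∀ x : X, ψ₁ ‖x‖ ≤ V x ∧ V x ≤ ψ₂ ‖x‖) ∧
    ∀ (x : X) (u : ℝ → U), AdmissibleInput u → χ ‖u 0‖ ≤ ‖x‖ →
      ∀ ψs : ℝ → X, IsMildSolution T f x u ψs →
        DiniDerivAlong V ψs x ≤ ((-α ‖x‖ : ℝ) : EReal)

end Defs

section Vgam

variable {X : Type*} [NormedAddCommGroup X] [NormedSpace ℝ X] [CompleteSpace X]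

/-- The equivalent norm `V^γ(x) := sup_{s ≥ 0} ‖e^{γs} T_s x‖`. -/
noncomputable def Vgam (T : ℝ → X →L[ℝ] X) (γ : ℝ) (x : X) : ℝ :=
  ⨆ s : Ici (0:ℝ), ‖Real.exp (γ * ↑s) • T ↑s x‖

end Vgam

set_option maxHeartbeats 1000000 in
/-- Dissipation inequality for `V^γ(x) = sup_{s≥0} ‖e^{γs}T_s x‖` along
mild solutions of the linear system `ẋ = Ax + Bu`:
`V̇^γ_u(x) ≤ −γ V^γ(x) + V^γ(B u(0))`. -/
theorem Vgam_dissipation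
    {X : Type*} [NormedAddCommGroup X] [NormedSpace ℝ X] [CompleteSpace X]
    {U : Type*} [NormedAddCommGroup U] [NormedSpace ℝ U]
    (T : ℝ → X →L[ℝ] X) (hT : IsC0Semigroup T)
    (M lam : ℝ) (hM : 0 < M) (hlam : 0 < lam)
    (hTdecay : ∀ t : ℝ, 0 ≤ t → ‖T t‖ ≤ M * Real.exp (-lam * t))
    (B : U →L[ℝ] X)
    (γ : ℝ) (hγ : 0 < γ) (hγlam : γ < lam)
    (x : X) (u : ℝ → U) (hu : AdmissibleInput u)
    (hu0 : ContinuousWithinAt u (Ici 0) 0) :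
    DiniDerivAlong (Vgam T γ)
        (fun h : ℝ => T h x + ∫ s in (0:ℝ)..h, T (h - s) (B (u s))) x
      ≤ ((-γ * Vgam T γ x + Vgam T γ (B (u 0)) : ℝ) : EReal) := by
  classical
  obtain ⟨hu_pc, C, hC⟩ := hu
  simp only [DiniDerivAlong]
  haveI : Nonempty (Ici (0:ℝ)) := ⟨⟨0, mem_Ici.mpr le_rfl⟩⟩
  have hM0 : (0:ℝ) ≤ M := hM.le
  have hTnorm : ∀ t : ℝ, 0 ≤ t → ‖T t‖ ≤ M := by
    intro t ht
    refine (hTdecay t ht).trans ?_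
    have h1 : Real.exp (-lam * t) ≤ 1 := Real.exp_le_one_iff.mpr (by nlinarith)
    nlinarith
  have hTapp : ∀ t : ℝ, 0 ≤ t → ∀ y : X, ‖T t y‖ ≤ M * ‖y‖ := fun t ht y =>
    ((T t).le_opNorm y).trans (mul_le_mul_of_nonneg_right (hTnorm t ht) (norm_nonneg y))
  -- pointwise bound for the sup
  have hterm : ∀ (y : X) (s : ℝ), 0 ≤ s → ‖Real.exp (γ * s) • T s y‖ ≤ M * ‖y‖ := by
    intro y s hs
    rw [norm_smul, Real.norm_eq_abs, abs_of_pos (Real.exp_pos _)]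
    have h1 : ‖T s y‖ ≤ M * Real.exp (-lam * s) * ‖y‖ :=
      ((T s).le_opNorm y).trans (mul_le_mul_of_nonneg_right (hTdecay s hs) (norm_nonneg y))
    calc Real.exp (γ * s) * ‖T s y‖
        ≤ Real.exp (γ * s) * (M * Real.exp (-lam * s) * ‖y‖) :=
          mul_le_mul_of_nonneg_left h1 (Real.exp_pos _).le
      _ = M * (Real.exp (γ * s) * Real.exp (-lam * s)) * ‖y‖ := by ring
      _ = M * Real.exp ((γ - lam) * s) * ‖y‖ := by rw [← Real.exp_add]; ring_nf
      _ ≤ M * 1 * ‖y‖ := by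
          have : Real.exp ((γ - lam) * s) ≤ 1 := Real.exp_le_one_iff.mpr (by nlinarith)
          have := mul_le_mul_of_nonneg_left this hM0
          nlinarith [norm_nonneg y]
      _ = M * ‖y‖ := by ring
  have hbdd : ∀ y : X, BddAbove (Set.range fun s : Ici (0:ℝ) => ‖Real.exp (γ * ↑s) • T ↑s y‖) := by
    intro y
    refine ⟨M * ‖y‖, ?_⟩
    rintro _ ⟨s, rfl⟩
    exact hterm y s s.2
  have hVle : ∀ y : X, Vgam T γ y ≤ M * ‖y‖ := by
    intro y
    exact ciSup_le fun s => hterm y s s.2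
  have hVge : ∀ y : X, ‖y‖ ≤ Vgam T γ y := by
    intro y
    have h1 := le_ciSup (hbdd y) (⟨0, mem_Ici.mpr le_rfl⟩ : Ici (0:ℝ))
    simpa [Vgam, hT.1] using h1
  have hV0 : ∀ y : X, 0 ≤ Vgam T γ y := fun y => (norm_nonneg y).trans (hVge y)
  have hVadd : ∀ y z : X, Vgam T γ (y + z) ≤ Vgam T γ y + Vgam T γ z := by
    intro y z
    refine ciSup_le fun s => ?_
    have h1 : ‖Real.exp (γ * ↑s) • T ↑s (y + z)‖
        ≤ ‖Real.exp (γ * ↑s) • T ↑s y‖ + ‖Real.exp (γ * ↑s) • T ↑s z‖ := by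
      rw [map_add, smul_add]; exact norm_add_le _ _
    exact h1.trans (add_le_add (le_ciSup (hbdd y) s) (le_ciSup (hbdd z) s))
  have hVsmul : ∀ (c : ℝ), 0 ≤ c → ∀ y : X, Vgam T γ (c • y) ≤ c * Vgam T γ y := by
    intro c hc y
    refine ciSup_le fun s => ?_
    have h1 : ‖Real.exp (γ * ↑s) • T ↑s (c • y)‖ = c * ‖Real.exp (γ * ↑s) • T ↑s y‖ := by
      rw [ContinuousLinearMap.map_smul, smul_comm, norm_smul, Real.norm_eq_abs, abs_of_nonneg hc]
    rw [h1]
    exact mul_le_mul_of_nonneg_left (le_ciSup (hbdd y) s) hc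
  have hVsemi : ∀ (h : ℝ), 0 ≤ h → ∀ y : X,
      Vgam T γ (T h y) ≤ Real.exp (-(γ * h)) * Vgam T γ y := by
    intro h hh y
    refine ciSup_le fun s => ?_
    obtain ⟨s, hs'⟩ := s
    have hs : (0:ℝ) ≤ s := mem_Ici.mp hs'
    have hsg : T s (T h y) = T (s + h) y := by
      rw [hT.2.1 s hs h hh, ContinuousLinearMap.comp_apply]
    have key : Real.exp (γ * s) = Real.exp (-(γ * h)) * Real.exp (γ * (s + h)) := by
      rw [← Real.exp_add]; congr 1; ring
    calc ‖Real.exp (γ * s) • T s (T h y)‖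
        = Real.exp (γ * s) * ‖T (s + h) y‖ := by
          rw [hsg, norm_smul, Real.norm_eq_abs, abs_of_pos (Real.exp_pos _)]
      _ = Real.exp (-(γ * h)) * (Real.exp (γ * (s + h)) * ‖T (s + h) y‖) := by rw [key]; ring
      _ = Real.exp (-(γ * h)) * ‖Real.exp (γ * (s + h)) • T (s + h) y‖ := by
          rw [norm_smul, Real.norm_eq_abs, abs_of_pos (Real.exp_pos _)]
      _ ≤ Real.exp (-(γ * h)) * Vgam T γ y := by
          refine mul_le_mul_of_nonneg_left ?_ (Real.exp_pos _).le
          exact le_ciSup (hbdd y) (⟨s + h, mem_Ici.mpr (add_nonneg hs hh)⟩ : Ici (0:ℝ))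
  -- notation
  set E : ℝ → X := fun h => (∫ s in (0:ℝ)..h, T (h - s) (B (u s))) - h • B (u 0) with hE
  have hMain : ∀ h : ℝ, 0 ≤ h →
      Vgam T γ (T h x + ∫ s in (0:ℝ)..h, T (h - s) (B (u s)))
        ≤ Real.exp (-(γ * h)) * Vgam T γ x + h * Vgam T γ (B (u 0)) + M * ‖E h‖ := by
    intro h hh
    have hdec : (T h x + ∫ s in (0:ℝ)..h, T (h - s) (B (u s)))
        = T h x + (h • B (u 0) + E h) := by
      simp only [hE]; abel
    calc Vgam T γ (T h x + ∫ s in (0:ℝ)..h, T (h - s) (B (u s)))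
        ≤ Vgam T γ (T h x) + (Vgam T γ (h • B (u 0)) + Vgam T γ (E h)) := by
          rw [hdec]; exact (hVadd _ _).trans (add_le_add_right (hVadd _ _) _)
      _ ≤ Real.exp (-(γ * h)) * Vgam T γ x + (h * Vgam T γ (B (u 0)) + M * ‖E h‖) :=
          add_le_add (hVsemi h hh x) (add_le_add (hVsmul h hh _) (hVle _))
      _ = _ := by ring
  -- joint continuity of (t, y) ↦ T t y on Ici 0 ×ˢ univ
  have hjoint : ∀ (t₀ : ℝ), 0 ≤ t₀ → ∀ y₀ : X,
      Tendsto (fun p : ℝ × X => T p.1 p.2) (nhdsWithin (t₀, y₀) (Ici 0 ×ˢ (univ : Set X)))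
        (nhds (T t₀ y₀)) := by
    intro t₀ ht₀ y₀
    rw [tendsto_iff_norm_sub_tendsto_zero]
    have hB1 : Tendsto (fun p : ℝ × X => M * ‖p.2 - y₀‖)
        (nhdsWithin (t₀, y₀) (Ici 0 ×ˢ (univ : Set X))) (nhds 0) := by
      have h1 : Tendsto (fun p : ℝ × X => M * ‖p.2 - y₀‖) (nhds (t₀, y₀)) (nhds (M * ‖y₀ - y₀‖)) :=
        (continuous_const.mul ((continuous_snd.sub continuous_const).norm)).tendsto _
      simpa using h1.mono_left nhdsWithin_le_nhds
    have hB2 : Tendsto (fun p : ℝ × X => ‖T p.1 y₀ - T t₀ y₀‖)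
        (nhdsWithin (t₀, y₀) (Ici 0 ×ˢ (univ : Set X))) (nhds 0) := by
      have hfst : Tendsto (fun p : ℝ × X => p.1)
          (nhdsWithin (t₀, y₀) (Ici 0 ×ˢ (univ : Set X))) (nhdsWithin t₀ (Ici 0)) := by
        rw [nhdsWithin_prod_eq]
        exact tendsto_fst
      have hc : Tendsto (fun t : ℝ => T t y₀) (nhdsWithin t₀ (Ici 0)) (nhds (T t₀ y₀)) :=
        hT.2.2 y₀ t₀ ht₀
      exact tendsto_iff_norm_sub_tendsto_zero.mp (hc.comp hfst)
    refine squeeze_zero' ?_ ?_ (by simpa using hB1.add hB2)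
    · exact Eventually.of_forall fun p => norm_nonneg _
    · filter_upwards [self_mem_nhdsWithin] with p hp
      have h1 : T p.1 p.2 - T t₀ y₀ = T p.1 (p.2 - y₀) + (T p.1 y₀ - T t₀ y₀) := by
        rw [map_sub]; abel
      rw [h1]
      exact (norm_add_le _ _).trans (add_le_add_left (hTapp p.1 hp.1 _) _)
  obtain ⟨S, hS⟩ := hu_pc 0 1
  have hC0 : 0 ≤ C := (norm_nonneg _).trans (hC 0 le_rfl)
  -- integrability for 0 < h ≤ 1
  have hint : ∀ h : ℝ, 0 < h → h ≤ 1 →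
      IntervalIntegrable (fun s => T (h - s) (B (u s))) volume 0 h := by
    intro h hh0 hh1
    rw [intervalIntegrable_iff_integrableOn_Ioc_of_le hh0.le]
    have hmeasS : MeasurableSet (Ioc (0:ℝ) h \ ↑S) :=
      measurableSet_Ioc.diff (S.finite_toSet.measurableSet)
    have hcont : ContinuousOn (fun s => T (h - s) (B (u s))) (Ioc 0 h \ ↑S) := by
      intro s hs
      have hsIcc : s ∈ Icc (0:ℝ) 1 := ⟨hs.1.1.le, hs.1.2.trans hh1⟩
      have hus : ContinuousAt u s := hS s hsIcc hs.2
      have hinner : ContinuousWithinAt (fun s : ℝ => ((h - s : ℝ), B (u s))) (Ioc 0 h \ ↑S) s :=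
        (ContinuousAt.prodMk ((continuous_const.sub continuous_id).continuousAt)
          ((B.continuous.continuousAt).comp hus)).continuousWithinAt
      have hmaps : MapsTo (fun s : ℝ => ((h - s : ℝ), B (u s))) (Ioc 0 h \ ↑S)
          (Ici 0 ×ˢ (univ : Set X)) := by
        intro t ht
        exact ⟨sub_nonneg.2 ht.1.2, mem_univ _⟩
      have hj : ContinuousWithinAt (fun p : ℝ × X => T p.1 p.2) (Ici 0 ×ˢ (univ : Set X))
          ((h - s : ℝ), B (u s)) := hjoint (h - s) (sub_nonneg.2 hs.1.2) (B (u s))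
      have h5 : ContinuousWithinAt ((fun p : ℝ × X => T p.1 p.2) ∘
          (fun s : ℝ => ((h - s : ℝ), B (u s)))) (Ioc 0 h \ ↑S) s :=
        ContinuousWithinAt.comp hj hinner hmaps
      exact h5
    have h1 : AEStronglyMeasurable (fun s => T (h - s) (B (u s)))
        (volume.restrict (Ioc 0 h \ ↑S)) := hcont.aestronglyMeasurable hmeasS
    have h2 : (volume : Measure ℝ).restrict (Ioc 0 h \ ↑S) = volume.restrict (Ioc 0 h) := by
      refine Measure.restrict_congr_set (diff_ae_eq_self.mpr ?_)
      exact measure_mono_null inter_subset_right (S.finite_toSet.measure_zero _)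
    haveI : IsFiniteMeasure ((volume : Measure ℝ).restrict (Ioc 0 h)) := by
      constructor
      rw [Measure.restrict_apply_univ]
      exact measure_Ioc_lt_top
    refine ⟨h2 ▸ h1, ?_⟩
    refine HasFiniteIntegral.of_bounded (C := M * (‖B‖ * C)) ?_
    refine (ae_restrict_iff' measurableSet_Ioc).2 (ae_of_all _ fun s hs => ?_)
    calc ‖T (h - s) (B (u s))‖ ≤ M * ‖B (u s)‖ := hTapp _ (sub_nonneg.2 hs.2) _
      _ ≤ M * (‖B‖ * ‖u s‖) := mul_le_mul_of_nonneg_left (B.le_opNorm _) hM0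
      _ ≤ M * (‖B‖ * C) := by
          refine mul_le_mul_of_nonneg_left ?_ hM0
          exact mul_le_mul_of_nonneg_left (hC s hs.1.le) (norm_nonneg _)
  -- the error term tends to 0
  have hr : Tendsto (fun h : ℝ => ‖E h‖ / h) (nhdsWithin 0 (Ioi 0)) (nhds 0) := by
    rw [Metric.tendsto_nhdsWithin_nhds]
    intro ε hε
    have hMB : (0:ℝ) ≤ M * ‖B‖ := mul_nonneg hM0 (norm_nonneg _)
    set ε₁ : ℝ := ε / (4 * (M * ‖B‖ + 1)) with hε₁
    set ε₂ : ℝ := ε / 4 with hε₂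
    have hε₁pos : 0 < ε₁ := by positivity
    have hε₂pos : 0 < ε₂ := by positivity
    obtain ⟨δ₁, hδ₁, hδ₁'⟩ := Metric.continuousWithinAt_iff.mp hu0 ε₁ hε₁pos
    obtain ⟨δ₂, hδ₂, hδ₂'⟩ := Metric.continuousWithinAt_iff.mp
      (hT.2.2 (B (u 0)) 0 (mem_Ici.mpr le_rfl)) ε₂ hε₂pos
    refine ⟨min δ₁ (min δ₂ 1), by positivity, ?_⟩
    intro h hhmem hhd
    have hh0 : 0 < h := hhmem
    rw [Real.dist_eq, sub_zero, abs_of_pos hh0] at hhd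
    have hh1 : h ≤ 1 := hhd.le.trans ((min_le_right _ _).trans (min_le_right _ _))
    have hhδ₁ : h < δ₁ := lt_of_lt_of_le hhd (min_le_left _ _)
    have hhδ₂ : h < δ₂ := lt_of_lt_of_le hhd ((min_le_right _ _).trans (min_le_left _ _))
    have hEeq : E h = ∫ s in (0:ℝ)..h, (T (h - s) (B (u s)) - B (u 0)) := by
      rw [intervalIntegral.integral_sub (hint h hh0 hh1) intervalIntegrable_const,
        intervalIntegral.integral_const]
      simp only [hE, sub_zero]
    have hptwise : ∀ s ∈ Set.uIoc (0:ℝ) h,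
        ‖T (h - s) (B (u s)) - B (u 0)‖ ≤ M * ‖B‖ * ε₁ + ε₂ := by
      intro s hs
      rw [Set.uIoc_of_le hh0.le] at hs
      have hs0 : 0 < s := hs.1
      have hsh : s ≤ h := hs.2
      have hu_close : ‖u s - u 0‖ ≤ ε₁ := by
        have := hδ₁' (mem_Ici.mpr hs0.le)
          (by rw [Real.dist_eq, sub_zero, abs_of_pos hs0]; exact lt_of_le_of_lt hsh hhδ₁)
        rw [dist_eq_norm] at this
        exact this.le
      have hT_close : ‖T (h - s) (B (u 0)) - B (u 0)‖ ≤ ε₂ := by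
        have := hδ₂' (mem_Ici.mpr (sub_nonneg.2 hsh))
          (by
            rw [Real.dist_eq, sub_zero, abs_of_nonneg (sub_nonneg.2 hsh)]
            calc h - s < h := by linarith
              _ < δ₂ := hhδ₂)
        rw [dist_eq_norm] at this
        simp only [hT.1, ContinuousLinearMap.one_apply] at this
        exact this.le
      have hsplit : T (h - s) (B (u s)) - B (u 0)
          = T (h - s) (B (u s) - B (u 0)) + (T (h - s) (B (u 0)) - B (u 0)) := by
        rw [map_sub]; abel
      rw [hsplit]
      refine (norm_add_le _ _).trans (add_le_add ?_ hT_close)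
      calc ‖T (h - s) (B (u s) - B (u 0))‖
          ≤ M * ‖B (u s) - B (u 0)‖ := hTapp _ (sub_nonneg.2 hsh) _
        _ = M * ‖B (u s - u 0)‖ := by rw [map_sub]
        _ ≤ M * (‖B‖ * ‖u s - u 0‖) := mul_le_mul_of_nonneg_left (B.le_opNorm _) hM0
        _ ≤ M * (‖B‖ * ε₁) := by
            refine mul_le_mul_of_nonneg_left ?_ hM0
            exact mul_le_mul_of_nonneg_left hu_close (norm_nonneg _)
        _ = M * ‖B‖ * ε₁ := by ring
    have hEb : ‖E h‖ ≤ (M * ‖B‖ * ε₁ + ε₂) * h := by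
      rw [hEeq]
      have := intervalIntegral.norm_integral_le_of_norm_le_const hptwise
      rwa [sub_zero, abs_of_pos hh0] at this
    have hkey : M * ‖B‖ * ε₁ + ε₂ < ε := by
      have h4 : (0:ℝ) < 4 * (M * ‖B‖ + 1) := by positivity
      have h1 : M * ‖B‖ * ε₁ ≤ ε / 4 := by
        rw [hε₁, mul_div_assoc']
        rw [div_le_div_iff₀ h4 (by norm_num)]
        nlinarith
      rw [hε₂]
      linarith
    rw [Real.dist_eq, sub_zero, abs_of_nonneg (by positivity)]
    calc ‖E h‖ / h ≤ M * ‖B‖ * ε₁ + ε₂ := by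
          rw [div_le_iff₀ hh0]; exact hEb
      _ < ε := hkey
  -- the slope of exp(-γ t) at 0
  have hterm1 : Tendsto (fun h : ℝ => (Real.exp (-(γ * h)) - 1) / h) (nhdsWithin 0 (Ioi 0))
      (nhds (-γ)) := by
    have hd : HasDerivAt (fun t : ℝ => Real.exp (-(γ * t))) (-γ) 0 := by
      have h1 : HasDerivAt (fun t : ℝ => -(γ * t)) (-γ) 0 := by
        exact (((hasDerivAt_id (0:ℝ)).const_mul γ).neg).congr_deriv (by ring)
      simpa using h1.exp
    rw [hasDerivAt_iff_tendsto_slope] at hd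
    have h2 : Tendsto (slope (fun t : ℝ => Real.exp (-(γ * t))) 0) (nhdsWithin 0 (Ioi 0))
        (nhds (-γ)) := hd.mono_left (nhdsWithin_mono 0 (fun y hy => hy.ne'))
    refine Tendsto.congr' ?_ h2
    filter_upwards [self_mem_nhdsWithin] with h hh
    rw [slope_def_field]
    norm_num
  -- limit of the bounding function
  set G : ℝ → ℝ := fun h =>
    (Real.exp (-(γ * h)) - 1) / h * Vgam T γ x + Vgam T γ (B (u 0)) + M * (‖E h‖ / h) with hG
  have hGlim : Tendsto G (nhdsWithin 0 (Ioi 0))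
      (nhds (-γ * Vgam T γ x + Vgam T γ (B (u 0)))) := by
    have h1 := ((hterm1.mul_const (Vgam T γ x)).add_const (Vgam T γ (B (u 0)))).add
      (hr.const_mul M)
    simpa using h1
  have hev : ∀ᶠ h in nhdsWithin (0:ℝ) (Ioi 0),
      (((Vgam T γ (T h x + ∫ s in (0:ℝ)..h, T (h - s) (B (u s)))
        - Vgam T γ x) / h : ℝ) : EReal) ≤ ((G h : ℝ) : EReal) := by
    filter_upwards [self_mem_nhdsWithin] with h hh
    rw [EReal.coe_le_coe_iff]
    have hh0 : (0:ℝ) < h := hh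
    have h1 := hMain h hh0.le
    have h2 : (Vgam T γ (T h x + ∫ s in (0:ℝ)..h, T (h - s) (B (u s))) - Vgam T γ x) / h
        ≤ (Real.exp (-(γ * h)) * Vgam T γ x + h * Vgam T γ (B (u 0)) + M * ‖E h‖
            - Vgam T γ x) / h := by
      apply div_le_div_of_nonneg_right _ hh0.le
      · linarith
    refine h2.trans (le_of_eq ?_)
    rw [hG]
    field_simp
    ring
  refine le_trans (limsup_le_limsup hev) ?_
  exact le_of_eq ((EReal.tendsto_coe.mpr hGlim).limsup_eq)
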